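/- arXiv:2511.03052 — 5 statements merged into one kernel-verified Lean document; each statement's English description precedes it below -/
import Mathlib

section
/- Let H be a real symmetric block matrix H = [[A, B], [Bᵀ, -C]] with A ⪰ μI, C ⪰ μI, and ‖H‖ ≤ L (operator norm), where 0 ≤ μ ≤ L. Then every eigenvalue λ of H satisfies λ ∈ [-L, -μ] ∪ [μ, L]. -/
open Matrix

/-- Every eigenvalue of the symmetric block matrix `H = [[A, B], [B.transpose, -C]]` with
`A ⪰ μI`, `C ⪰ μI` and operator norm `‖H‖ ≤ L` lies in `[-L, -μ] ∪ [μ, L]`. -/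
theorem eigenvalues_of_saddle_hessian
    {n m : ℕ} (μ L : ℝ) (hμ : 0 ≤ μ) (hμL : μ ≤ L)
    (A : Matrix (Fin n) (Fin n) ℝ) (C : Matrix (Fin m) (Fin m) ℝ)
    (B : Matrix (Fin n) (Fin m) ℝ)
    (hA : A.IsSymm) (hC : C.IsSymm)
    (hAμ : (A - μ • (1 : Matrix (Fin n) (Fin n) ℝ)).PosSemidef)
    (hCμ : (C - μ • (1 : Matrix (Fin m) (Fin m) ℝ)).PosSemidef)
    (H : Matrix (Fin n ⊕ Fin m) (Fin n ⊕ Fin m) ℝ)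
    (hH : H = Matrix.fromBlocks A B B.transpose (-C))
    (hnorm : ‖Matrix.toEuclideanCLM (𝕜 := ℝ) H‖ ≤ L)
    (lam : ℝ) (v : (Fin n ⊕ Fin m) → ℝ) (hv : v ≠ 0)
    (heig : H.mulVec v = lam • v) :
    lam ∈ Set.Icc (-L) (-μ) ∪ Set.Icc μ L := by
  -- Step 1: |lam| ≤ L from the operator norm bound
  have hw0 : (WithLp.equiv 2 ((Fin n ⊕ Fin m) → ℝ)).symm v ≠ 0 := by
    simpa using hv
  have hwpos : 0 < ‖(WithLp.equiv 2 ((Fin n ⊕ Fin m) → ℝ)).symm v‖ :=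
    norm_pos_iff.mpr hw0
  have happ : Matrix.toEuclideanCLM (𝕜 := ℝ) H ((WithLp.equiv 2 _).symm v)
      = lam • (WithLp.equiv 2 _).symm v := by
    show Matrix.toEuclideanCLM (𝕜 := ℝ) H (WithLp.toLp 2 v) = _
    rw [Matrix.toEuclideanCLM_toLp, heig]
    rfl
  have habsL : |lam| ≤ L := by
    have h1 := (Matrix.toEuclideanCLM (𝕜 := ℝ) H).le_opNorm ((WithLp.equiv 2 _).symm v)
    rw [happ, norm_smul] at h1
    have h2 : ‖Matrix.toEuclideanCLM (𝕜 := ℝ) H‖ * ‖(WithLp.equiv 2 ((Fin n ⊕ Fin m) → ℝ)).symm v‖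
        ≤ L * ‖(WithLp.equiv 2 ((Fin n ⊕ Fin m) → ℝ)).symm v‖ :=
      mul_le_mul_of_nonneg_right hnorm (norm_nonneg _)
    have := le_trans h1 h2
    simpa [Real.norm_eq_abs] using (mul_le_mul_iff_of_pos_right hwpos).mp this
  -- Step 2: μ ≤ |lam|
  subst hH
  set x : Fin n → ℝ := v ∘ Sum.inl with hx
  set y : Fin m → ℝ := v ∘ Sum.inr with hy
  have hv' : v = Sum.elim x y := (Sum.elim_comp_inl_inr v).symm
  rw [hv', fromBlocks_mulVec] at heig
  have e1 : x ⬝ᵥ (A *ᵥ x) + x ⬝ᵥ (B *ᵥ y) = lam * (x ⬝ᵥ x) := by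
    have h : A *ᵥ x + B *ᵥ y = lam • x := by
      funext i
      have := congrFun heig (Sum.inl i)
      simpa using this
    have := congrArg (fun w => x ⬝ᵥ w) h
    simpa [dotProduct_add, dotProduct_smul, smul_eq_mul] using this
  have e2 : y ⬝ᵥ (B.transpose *ᵥ x) - y ⬝ᵥ (C *ᵥ y) = lam * (y ⬝ᵥ y) := by
    have h : B.transpose *ᵥ x + (-C) *ᵥ y = lam • y := by
      funext i
      have := congrFun heig (Sum.inr i)
      simpa using this
    have := congrArg (fun w => y ⬝ᵥ w) h
    simpa [dotProduct_add, dotProduct_smul, smul_eq_mul, neg_mulVec, dotProduct_neg,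
      sub_eq_add_neg] using this
  have hcross : x ⬝ᵥ (B *ᵥ y) = y ⬝ᵥ (B.transpose *ᵥ x) := by
    rw [mulVec_transpose, dotProduct_mulVec, dotProduct_comm]
  have hAq : μ * (x ⬝ᵥ x) ≤ x ⬝ᵥ (A *ᵥ x) := by
    have h := hAμ.dotProduct_mulVec_nonneg x
    simp only [star_trivial, sub_mulVec, smul_mulVec, one_mulVec, dotProduct_sub,
      dotProduct_smul, smul_eq_mul] at h
    linarith
  have hCq : μ * (y ⬝ᵥ y) ≤ y ⬝ᵥ (C *ᵥ y) := by
    have h := hCμ.dotProduct_mulVec_nonneg y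
    simp only [star_trivial, sub_mulVec, smul_mulVec, one_mulVec, dotProduct_sub,
      dotProduct_smul, smul_eq_mul] at h
    linarith
  have hs : 0 ≤ x ⬝ᵥ x := Finset.sum_nonneg fun i _ => mul_self_nonneg _
  have ht : 0 ≤ y ⬝ᵥ y := Finset.sum_nonneg fun i _ => mul_self_nonneg _
  have hst : 0 < x ⬝ᵥ x + y ⬝ᵥ y := by
    have hvv : v ⬝ᵥ v = x ⬝ᵥ x + y ⬝ᵥ y := by
      rw [hv']
      simp [dotProduct, Fintype.sum_sum_type]
    have : v ⬝ᵥ v ≠ 0 := fun h => hv (dotProduct_self_eq_zero.mp h)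
    have hnn : 0 ≤ v ⬝ᵥ v := Finset.sum_nonneg fun i _ => mul_self_nonneg _
    rw [hvv] at this hnn
    exact lt_of_le_of_ne hnn (Ne.symm this)
  have key : μ * (x ⬝ᵥ x + y ⬝ᵥ y) ≤ |lam| * (x ⬝ᵥ x + y ⬝ᵥ y) := by
    have hsum : x ⬝ᵥ (A *ᵥ x) + y ⬝ᵥ (C *ᵥ y) = lam * (x ⬝ᵥ x - y ⬝ᵥ y) := by
      rw [hcross] at e1
      linarith [e1, e2]
    have h1 : lam * (x ⬝ᵥ x - y ⬝ᵥ y) ≤ |lam| * (x ⬝ᵥ x + y ⬝ᵥ y) := by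
      calc lam * (x ⬝ᵥ x - y ⬝ᵥ y) ≤ |lam * (x ⬝ᵥ x - y ⬝ᵥ y)| := le_abs_self _
        _ = |lam| * |x ⬝ᵥ x - y ⬝ᵥ y| := abs_mul _ _
        _ ≤ |lam| * (x ⬝ᵥ x + y ⬝ᵥ y) := by
            apply mul_le_mul_of_nonneg_left _ (abs_nonneg _)
            rw [abs_sub_le_iff]; constructor <;> linarith
    linarith
  have hμlam : μ ≤ |lam| := le_of_mul_le_mul_right (by linarith) hst
  rcases le_or_gt 0 lam with h | h
  · right
    rw [abs_of_nonneg h] at hμlam habsL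
    exact ⟨hμlam, habsL⟩
  · left
    rw [abs_of_neg h] at hμlam habsL
    exact ⟨by linarith, by linarith⟩
end

section
/- Let H = [[A, B], [Bᵀ, -C]] with A ⪰ μI and C ⪰ μI for some μ > 0, and let r ∈ (-μ, μ). Then H - rI is invertible. (Consequently H has no eigenvalues in the open interval (-μ, μ).) -/
open Matrix

lemma posDef_smul_one' {k : ℕ} {c : ℝ} (hc : 0 < c) :
    (c • (1 : Matrix (Fin k) (Fin k) ℝ)).PosDef := by
  rw [Matrix.smul_one_eq_diagonal]
  exact Matrix.PosDef.diagonal fun _ => hc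

lemma isSymm_posDef_shift {k : ℕ} {M : Matrix (Fin k) (Fin k) ℝ} {μ r : ℝ}
    (hM : (M - μ • (1 : Matrix (Fin k) (Fin k) ℝ)).PosSemidef) (h : r < μ) :
    (M - r • (1 : Matrix (Fin k) (Fin k) ℝ)).PosDef := by
  have : M - r • (1 : Matrix (Fin k) (Fin k) ℝ)
      = (M - μ • 1) + (μ - r) • (1 : Matrix (Fin k) (Fin k) ℝ) := by
    rw [sub_smul]; module
  rw [this]
  exact Matrix.PosDef.posSemidef_add hM (posDef_smul_one' (by linarith))

/-- If `A ⪰ μI`, `C ⪰ μI` with `μ > 0` and `r ∈ (-μ, μ)`, then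
`H - rI` is invertible, where `H = [[A, B], [Bᵀ, -C]]`. -/
theorem saddle_hessian_shift_invertible
    {n m : ℕ} (μ : ℝ) (hμ : 0 < μ)
    (A : Matrix (Fin n) (Fin n) ℝ) (C : Matrix (Fin m) (Fin m) ℝ)
    (B : Matrix (Fin n) (Fin m) ℝ)
    (hA : A.IsSymm) (hC : C.IsSymm)
    (hAμ : (A - μ • (1 : Matrix (Fin n) (Fin n) ℝ)).PosSemidef)
    (hCμ : (C - μ • (1 : Matrix (Fin m) (Fin m) ℝ)).PosSemidef)
    (r : ℝ) (hr₁ : -μ < r) (hr₂ : r < μ) :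
    IsUnit (Matrix.fromBlocks A B B.transpose (-C)
      - r • (1 : Matrix (Fin n ⊕ Fin m) (Fin n ⊕ Fin m) ℝ)) := by
  classical
  -- positive definiteness of the two shifted blocks
  have hApos : (A - r • (1 : Matrix (Fin n) (Fin n) ℝ)).PosDef :=
    isSymm_posDef_shift hAμ hr₂
  have hCpos : (C + r • (1 : Matrix (Fin m) (Fin m) ℝ)).PosDef := by
    have := isSymm_posDef_shift hCμ (show -r < μ by linarith)
    simpa [sub_eq_add_neg, neg_smul] using this
  -- rewrite as a block matrix
  have hrw : Matrix.fromBlocks A B B.transpose (-C)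
      - r • (1 : Matrix (Fin n ⊕ Fin m) (Fin n ⊕ Fin m) ℝ)
      = Matrix.fromBlocks (A - r • 1) B B.transpose (-(C + r • 1)) := by
    ext i j
    rcases i with i | i <;> rcases j with j | j <;>
      simp [Matrix.fromBlocks, Matrix.one_apply, Matrix.sub_apply, Matrix.smul_apply,
        sub_eq_add_neg, neg_add, apply_ite] <;> split <;> simp_all <;> ring
  rw [hrw]
  -- invertibility of the bottom-right block
  haveI hCinv : Invertible (C + r • (1 : Matrix (Fin m) (Fin m) ℝ)) :=
    (Matrix.isUnit_iff_isUnit_det _ |>.2 hCpos.det_pos.ne'.isUnit).invertible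
  haveI hDinv : Invertible (-(C + r • (1 : Matrix (Fin m) (Fin m) ℝ))) := invertibleNeg _
  -- the Schur complement
  have hschur : (A - r • 1) - B * ⅟(-(C + r • (1 : Matrix (Fin m) (Fin m) ℝ))) * B.transpose
      = (A - r • 1) + B * ⅟(C + r • (1 : Matrix (Fin m) (Fin m) ℝ)) * B.transpose := by
    rw [invOf_neg]
    simp [Matrix.mul_neg, Matrix.neg_mul, sub_eq_add_neg]
  haveI : Invertible ((A - r • 1) - B * ⅟(-(C + r • (1 : Matrix (Fin m) (Fin m) ℝ))) * B.transpose) := by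
    rw [hschur]
    have hpsd : (B * ⅟(C + r • (1 : Matrix (Fin m) (Fin m) ℝ)) * B.transpose).PosSemidef := by
      have hinvpd : ((C + r • (1 : Matrix (Fin m) (Fin m) ℝ))⁻¹).PosDef := hCpos.inv
      rw [Matrix.invOf_eq_nonsing_inv]
      have := hinvpd.posSemidef.mul_mul_conjTranspose_same B
      simpa [Matrix.conjTranspose_eq_transpose_of_trivial] using this
    have hpd := hApos.add_posSemidef hpsd
    exact (Matrix.isUnit_iff_isUnit_det _ |>.2 hpd.det_pos.ne'.isUnit).invertible
  letI := Matrix.fromBlocks₂₂Invertible (A - r • 1) B B.transpose (-(C + r • 1))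
  exact isUnit_of_invertible _
end

section
/- Let ν be a probability measure supported on a finite set S ⊂ ℂ, invariant under conjugation, and suppose R ≤ min_{p ∈ P_T} E_{λ∼ν}|p(λ)|². Then there exist a real matrix M (of the block form with spectrum S, eigenvalue multiplicities weighted to realize ν), vectors z_0, z*, such that for every polynomial p of degree at most T with p(0)=1, ‖p(M)(z_0 - z*)‖² = E_{λ∼ν}|p(λ)|² ≥ R, while ‖z_0 - z*‖ = 1. -/
open Polynomial

private lemma aeval_mulVec_eig {n : Type*} [Fintype n] [DecidableEq n]
    (A : Matrix n n ℂ) (u : n → ℂ) (μ : ℂ) (h : A.mulVec u = μ • u) (p : ℂ[X]) :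
    (Polynomial.aeval A p).mulVec u = p.eval μ • u := by
  have hpow : ∀ k : ℕ, (A ^ k).mulVec u = μ ^ k • u := by
    intro k
    induction k with
    | zero => simp [Matrix.one_mulVec]
    | succ k ih =>
      rw [pow_succ', ← Matrix.mulVec_mulVec, ih, Matrix.mulVec_smul, h, pow_succ',
        smul_smul, mul_comm]
  induction p using Polynomial.induction_on' with
  | add p q hp hq => simp [map_add, Matrix.add_mulVec, hp, hq, add_smul]
  | monomial k a =>
    rw [aeval_monomial, eval_monomial, ← Algebra.smul_def, Matrix.smul_mulVec,
      hpow, smul_smul]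

private lemma key_parallelogram (r : ℝ) (u v : ℂ) :
    ‖(r:ℂ) / 2 * u + (r:ℂ) / 2 * v‖ ^ 2
      + ‖(r:ℂ) / 2 * u * Complex.I + -((r:ℂ) / 2 * v * Complex.I)‖ ^ 2
    = r ^ 2 / 2 * (‖u‖ ^ 2 + ‖v‖ ^ 2) := by
  have hr : (r:ℂ) / 2 = ((r / 2 : ℝ) : ℂ) := by push_cast; ring
  have h1 : (r:ℂ) / 2 * u + (r:ℂ) / 2 * v = ((r / 2 : ℝ) : ℂ) * (u + v) := by
    rw [hr]; ring
  have h2 : (r:ℂ) / 2 * u * Complex.I + -((r:ℂ) / 2 * v * Complex.I)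
      = (((r / 2 : ℝ) : ℂ) * (u - v)) * Complex.I := by rw [hr]; ring
  have par : Complex.normSq (u + v) + Complex.normSq (u - v)
      = 2 * (Complex.normSq u + Complex.normSq v) := by
    simp only [Complex.normSq_apply, Complex.add_re, Complex.add_im, Complex.sub_re,
      Complex.sub_im]
    ring
  rw [h1, h2, norm_mul, norm_mul, Complex.norm_I,
    mul_one, norm_mul, Complex.norm_real, Real.norm_eq_abs]
  rw [mul_pow, mul_pow, sq_abs, Complex.sq_norm, Complex.sq_norm, Complex.sq_norm,
    Complex.sq_norm]
  linear_combination (r / 2) ^ 2 * par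

/-- Hard instance construction from a conjugation-invariant finitely supported measure:
if `R ≤ min_{p ∈ P_T} E_{λ∼ν}|p(λ)|²`, then there is a real matrix `M` and vectors
`z₀, z*` with `‖z₀ - z*‖ = 1` such that `‖p(M)(z₀ - z*)‖² = E_{λ∼ν}|p(λ)|² ≥ R`
for every polynomial `p` of degree ≤ T with `p(0) = 1`. -/
theorem hard_instance_from_measure
    (T : ℕ) (R : ℝ) (S : Finset ℂ) (w : ℂ → ℝ)
    (hw0 : ∀ z, 0 ≤ w z) (hw1 : ∑ z ∈ S, w z = 1)
    (hSconj : ∀ z ∈ S, (starRingEnd ℂ) z ∈ S)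
    (hwconj : ∀ z, w ((starRingEnd ℂ) z) = w z)
    (hR : ∀ p : Polynomial ℂ, p.natDegree ≤ T → p.eval 0 = 1 →
      R ≤ ∑ z ∈ S, w z * ‖p.eval z‖ ^ 2) :
    ∃ (n : ℕ) (M : Matrix (Fin n) (Fin n) ℝ) (z₀ zstar : Fin n → ℝ),
      (∑ i, (z₀ i - zstar i) ^ 2 = 1) ∧
      ∀ p : Polynomial ℂ, p.natDegree ≤ T → p.eval 0 = 1 →
        (∑ i, ‖
            ((Polynomial.aeval (M.map Complex.ofReal) p).mulVec
              (fun i => ((z₀ i - zstar i : ℝ) : ℂ))) i‖ ^ 2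
          = ∑ z ∈ S, w z * ‖p.eval z‖ ^ 2) ∧
        R ≤ ∑ i, ‖
            ((Polynomial.aeval (M.map Complex.ofReal) p).mulVec
              (fun i => ((z₀ i - zstar i : ℝ) : ℂ))) i‖ ^ 2 := by
  classical
  -- index type
  let ιS := {z : ℂ // z ∈ S}
  let blk : ℂ → Matrix (Fin 2) (Fin 2) ℝ := fun l => !![l.re, l.im; -l.im, l.re]
  let Mr : Matrix (Fin 2 × ιS) (Fin 2 × ιS) ℝ :=
    fun x y => if x.2 = y.2 then blk (x.2 : ℂ) x.1 y.1 else 0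
  let Mc : Matrix (Fin 2 × ιS) (Fin 2 × ιS) ℂ := Mr.map Complex.ofReal
  let u : ιS → ℂ → (Fin 2 × ιS → ℂ) :=
    fun μ s x => if x.2 = μ then (if x.1 = 0 then 1 else s) else 0
  have heig : ∀ (μ : ιS) (s : ℂ), s * s = -1 →
      Mc.mulVec (u μ s) = ((((μ:ℂ).re : ℂ)) + (((μ:ℂ).im : ℂ)) * s) • u μ s := by
    intro μ s hs
    funext x
    obtain ⟨i, κ⟩ := x
    show ∑ y : Fin 2 × ιS, Mc (i, κ) y * u μ s y = _
    rw [Fintype.sum_prod_type]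
    have hrow : ∀ j : Fin 2,
        ∑ τ : ιS, Mc (i, κ) (j, τ) * u μ s (j, τ) = Mc (i, κ) (j, μ) * u μ s (j, μ) := by
      intro j
      refine Finset.sum_eq_single μ (fun τ _ hτ => ?_) (by simp)
      simp [u, hτ]
    rw [Fin.sum_univ_two, hrow 0, hrow 1]
    by_cases hκ : κ = μ
    · subst hκ
      fin_cases i
      · simp [Mc, Mr, blk, u, Matrix.map, Matrix.of_apply]
      · simp [Mc, Mr, blk, u, Matrix.map, Matrix.of_apply]
        linear_combination (-(((κ:ℂ).im : ℂ))) * hs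
    · simp [Mc, Mr, u, hκ, Matrix.map, Matrix.of_apply]
  let c : ιS → ℝ := fun μ => Real.sqrt (w μ)
  have hc2 : ∀ μ : ιS, c μ ^ 2 = w μ := fun μ => Real.sq_sqrt (hw0 μ)
  let vr : Fin 2 × ιS → ℝ := fun x => if x.1 = 0 then c x.2 else 0
  let vC : Fin 2 × ιS → ℂ := fun x => (vr x : ℂ)
  have hvc : vC = ∑ μ : ιS, (((c μ / 2 : ℝ) : ℂ) • u μ Complex.I
      + ((c μ / 2 : ℝ) : ℂ) • u μ (-Complex.I)) := by
    funext x
    obtain ⟨i, κ⟩ := x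
    rw [Finset.sum_apply, Finset.sum_eq_single κ (fun τ _ hτ => by simp [u, Ne.symm hτ]) (by simp)]
    fin_cases i
    · simp [vC, vr, u]
    · simp [vC, vr, u]
  have hI : ∀ μ : ιS, ((((μ:ℂ).re : ℂ)) + (((μ:ℂ).im : ℂ)) * Complex.I) = (μ:ℂ) :=
    fun μ => Complex.re_add_im _
  have hmI : ∀ μ : ιS,
      ((((μ:ℂ).re : ℂ)) + (((μ:ℂ).im : ℂ)) * (-Complex.I)) = (starRingEnd ℂ) (μ:ℂ) := by
    intro μ
    apply Complex.ext <;> simp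
  -- the main computation
  have main : ∀ p : ℂ[X],
      ∑ x : Fin 2 × ιS, ‖((Polynomial.aeval Mc p).mulVec vC) x‖ ^ 2
        = ∑ z ∈ S, w z * ‖p.eval z‖ ^ 2 := by
    intro p
    have hlin : ∀ (A : Matrix (Fin 2 × ιS) (Fin 2 × ιS) ℂ) (f : ιS → (Fin 2 × ιS → ℂ)),
        A.mulVec (∑ μ : ιS, f μ) = ∑ μ : ιS, A.mulVec (f μ) := by
      intro A f
      funext x
      simp only [Matrix.mulVec, dotProduct, Finset.sum_apply, Finset.mul_sum]
      rw [Finset.sum_comm]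
    have hW : (Polynomial.aeval Mc p).mulVec vC
        = ∑ μ : ιS, ((((c μ / 2 : ℝ):ℂ) * p.eval (μ:ℂ)) • u μ Complex.I
            + (((c μ / 2 : ℝ):ℂ) * p.eval ((starRingEnd ℂ) (μ:ℂ))) • u μ (-Complex.I)) := by
      rw [hvc, hlin]
      refine Finset.sum_congr rfl fun μ _ => ?_
      rw [Matrix.mulVec_add, Matrix.mulVec_smul, Matrix.mulVec_smul,
        aeval_mulVec_eig Mc (u μ Complex.I) (μ:ℂ)
          (by rw [← hI μ]; exact heig μ _ Complex.I_mul_I) p,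
        aeval_mulVec_eig Mc (u μ (-Complex.I)) ((starRingEnd ℂ) (μ:ℂ))
          (by rw [← hmI μ]; exact heig μ _ (by rw [neg_mul_neg]; exact Complex.I_mul_I)) p,
        smul_smul, smul_smul]
    have hWpt : ∀ (i : Fin 2) (κ : ιS), ((Polynomial.aeval Mc p).mulVec vC) (i, κ)
        = (((c κ / 2 : ℝ):ℂ) * p.eval (κ:ℂ)) * (if i = 0 then 1 else Complex.I)
          + (((c κ / 2 : ℝ):ℂ) * p.eval ((starRingEnd ℂ) (κ:ℂ)))
              * (if i = 0 then 1 else -Complex.I) := by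
      intro i κ
      rw [hW, Finset.sum_apply, Finset.sum_eq_single κ (fun τ _ hτ => by simp [u, Ne.symm hτ]) (by simp)]
      simp [u]
    rw [Fintype.sum_prod_type, Fin.sum_univ_two, ← Finset.sum_add_distrib]
    have hterm : ∀ κ : ιS,
        ‖((Polynomial.aeval Mc p).mulVec vC) (0, κ)‖ ^ 2
          + ‖((Polynomial.aeval Mc p).mulVec vC) (1, κ)‖ ^ 2
        = w (κ:ℂ) / 2 * (‖p.eval (κ:ℂ)‖ ^ 2
            + ‖p.eval ((starRingEnd ℂ) (κ:ℂ))‖ ^ 2) := by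
      intro κ
      rw [hWpt 0 κ, hWpt 1 κ]
      norm_num
      rw [key_parallelogram (c κ) (p.eval (κ:ℂ)) (p.eval ((starRingEnd ℂ) (κ:ℂ))), hc2 κ]
    rw [Finset.sum_congr rfl (fun κ _ => hterm κ)]
    have hcoe : ∑ κ : ιS, w (κ:ℂ) / 2 * (‖p.eval (κ:ℂ)‖ ^ 2
            + ‖p.eval ((starRingEnd ℂ) (κ:ℂ))‖ ^ 2)
        = ∑ z ∈ S, w z / 2 * (‖p.eval z‖ ^ 2
            + ‖p.eval ((starRingEnd ℂ) z)‖ ^ 2) :=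
      Finset.sum_coe_sort S (fun z => w z / 2 * (‖p.eval z‖ ^ 2
            + ‖p.eval ((starRingEnd ℂ) z)‖ ^ 2))
    rw [hcoe]
    have hconj : ∑ z ∈ S, w z * ‖p.eval ((starRingEnd ℂ) z)‖ ^ 2
        = ∑ z ∈ S, w z * ‖p.eval z‖ ^ 2 := by
      refine Finset.sum_nbij' (i := fun z => (starRingEnd ℂ) z) (j := fun z => (starRingEnd ℂ) z)
        (fun a ha => hSconj a ha) (fun a ha => hSconj a ha)
        (fun a _ => by simp) (fun a _ => by simp) (fun a _ => by rw [hwconj a])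
    calc ∑ z ∈ S, w z / 2 * (‖p.eval z‖ ^ 2
            + ‖p.eval ((starRingEnd ℂ) z)‖ ^ 2)
        = (∑ z ∈ S, w z * ‖p.eval z‖ ^ 2) / 2
          + (∑ z ∈ S, w z * ‖p.eval ((starRingEnd ℂ) z)‖ ^ 2) / 2 := by
          rw [Finset.sum_div, Finset.sum_div, ← Finset.sum_add_distrib]
          exact Finset.sum_congr rfl fun z _ => by ring
      _ = ∑ z ∈ S, w z * ‖p.eval z‖ ^ 2 := by rw [hconj]; ring
  have hnorm : ∑ x : Fin 2 × ιS, vr x ^ 2 = 1 := by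
    rw [Fintype.sum_prod_type, Fin.sum_univ_two]
    have h0 : ∑ κ : ιS, vr (0, κ) ^ 2 = ∑ κ : ιS, w (κ:ℂ) := by
      refine Finset.sum_congr rfl fun κ _ => ?_
      simp [vr]
      exact hc2 κ
    have h1 : ∑ κ : ιS, vr (1, κ) ^ 2 = 0 := by
      refine Finset.sum_eq_zero fun κ _ => ?_
      simp [vr]
    rw [h0, h1, add_zero, Finset.sum_coe_sort S w, hw1]
  -- transport along an equivalence to `Fin n`
  let n : ℕ := Fintype.card (Fin 2 × ιS)
  let e : (Fin 2 × ιS) ≃ Fin n := Fintype.equivFin _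
  refine ⟨n, Matrix.reindex e e Mr, fun k => vr (e.symm k), 0, ?_, ?_⟩
  · simp only [Pi.zero_apply, sub_zero]
    rw [← hnorm]
    exact Equiv.sum_comp e.symm (fun x => vr x ^ 2)
  · intro p hdeg hp0
    have hmap : (Matrix.reindex e e Mr).map Complex.ofReal = Matrix.reindex e e Mc := by
      ext k l
      simp [Mc, Matrix.reindex_apply, Matrix.submatrix_apply, Matrix.map_apply]
    have haev : Polynomial.aeval ((Matrix.reindex e e Mr).map Complex.ofReal) p
        = Matrix.reindex e e (Polynomial.aeval Mc p) := by
      rw [hmap, ← Matrix.reindexAlgEquiv_apply ℂ ℂ e, ← Matrix.reindexAlgEquiv_apply ℂ ℂ e]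
      exact Polynomial.aeval_algHom_apply (Matrix.reindexAlgEquiv ℂ ℂ e) Mc p
    have hvec : (fun k : Fin n => (((fun k => vr (e.symm k)) k - (0 : Fin n → ℝ) k : ℝ) : ℂ))
        = vC ∘ e.symm := by
      funext k
      simp [vC]
    have hmv : (Matrix.reindex e e (Polynomial.aeval Mc p)).mulVec (vC ∘ e.symm)
        = ((Polynomial.aeval Mc p).mulVec vC) ∘ e.symm := by
      rw [Matrix.reindex_apply, Matrix.submatrix_mulVec_equiv]
      have hvv : (vC ∘ ⇑e.symm) ∘ ⇑(e.symm.symm) = vC := by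
        funext y
        simp
      rw [hvv]
    have hsum : ∑ k : Fin n, ‖(((Polynomial.aeval ((Matrix.reindex e e Mr).map Complex.ofReal) p)).mulVec
            (fun k : Fin n => (((fun k => vr (e.symm k)) k - (0 : Fin n → ℝ) k : ℝ) : ℂ))) k‖ ^ 2
        = ∑ x : Fin 2 × ιS, ‖((Polynomial.aeval Mc p).mulVec vC) x‖ ^ 2 := by
      rw [haev, hvec, hmv]
      exact Equiv.sum_comp e.symm
        (fun x => ‖((Polynomial.aeval Mc p).mulVec vC) x‖ ^ 2)
    constructor
    · rw [hsum, main p]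
    · rw [hsum, main p]
      exact hR p hdeg hp0
end

section
/- Let K ⊂ ℂ be compact with simply connected complement in the Riemann sphere, g_K its Green's function with pole at infinity, and λ ∈ ℂ \ K. Then for every polynomial p of degree at most T, |p(λ)| ≤ e^{T·g_K(λ)} · sup_{z∈K}|p(z)| (Bernstein–Walsh inequality). Consequently min over p of degree ≤ T with p(0)=1 of sup_{z∈K}|p(z)| ≥ e^{-T·g_K(0)} whenever 0 ∉ K. -/
open Polynomial Filter Metric Set

private lemma bw_poly_eval_bound (p : Polynomial ℂ) (T : ℕ) (hdeg : p.natDegree ≤ T)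
    {z : ℂ} (hz : 1 ≤ ‖z‖) :
    ‖p.eval z‖ ≤
      (∑ i ∈ Finset.range (p.natDegree + 1), ‖p.coeff i‖) * ‖z‖ ^ T := by
  conv_lhs => rw [Polynomial.eval_eq_sum_range]
  calc ‖∑ i ∈ Finset.range (p.natDegree + 1), p.coeff i * z ^ i‖
      ≤ ∑ i ∈ Finset.range (p.natDegree + 1), ‖p.coeff i * z ^ i‖ :=
        norm_sum_le _ _
    _ ≤ ∑ i ∈ Finset.range (p.natDegree + 1), ‖p.coeff i‖ * ‖z‖ ^ T := by
        refine Finset.sum_le_sum fun i hi => ?_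
        rw [norm_mul, norm_pow]
        refine mul_le_mul_of_nonneg_left ?_ (norm_nonneg _)
        exact pow_le_pow_right₀ hz (le_trans (Nat.lt_succ_iff.mp (Finset.mem_range.mp hi)) hdeg)
    _ = _ := by rw [← Finset.sum_mul]

/-- Bernstein–Walsh inequality. Let `K ⊂ ℂ` be a nonempty compact set and let `Φ` be the
conformal map of the complement of `K` onto the exterior of the unit disc with `Φ(∞) = ∞`
and `Φ'(∞) > 0`, so that `g_K = log |Φ|` is the Green's function of `K` with pole at `∞`.
Then `|p(λ)| ≤ exp(T · g_K(λ)) · sup_{z ∈ K} |p(z)|` for every polynomial `p` of degree ≤ T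
and every `λ ∉ K`; consequently, if `0 ∉ K`, every such `p` with `p(0) = 1` satisfies
`sup_{z ∈ K} |p(z)| ≥ exp(-T · g_K(0))`. -/
theorem bernstein_walsh
    (K : Set ℂ) (hK : IsCompact K) (hKne : K.Nonempty)
    (Φ : ℂ → ℂ)
    (hΦdiff : DifferentiableOn ℂ Φ Kᶜ)
    (hΦbij : Set.BijOn Φ Kᶜ {w : ℂ | 1 < ‖w‖})
    (hPhiInf : Tendsto Φ (cocompact ℂ) (cocompact ℂ))
    (hPhiDerivInf : ∃ c : ℝ, 0 < c ∧ Tendsto (fun z => Φ z / z) (cocompact ℂ) (nhds (c : ℂ)))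
    (T : ℕ) (p : Polynomial ℂ) (hdeg : p.natDegree ≤ T) :
    (∀ lam ∉ K, ‖p.eval lam‖ ≤
      Real.exp (T * Real.log (‖Φ lam‖)) *
        sSup ((fun z => ‖p.eval z‖) '' K)) ∧
    (0 ∉ K → p.eval 0 = 1 →
      Real.exp (-(T * Real.log (‖Φ 0‖))) ≤
        sSup ((fun z => ‖p.eval z‖) '' K)) := by
  obtain ⟨c, hc0, hc⟩ := hPhiDerivInf
  have hcont : Continuous fun z : ℂ => ‖p.eval z‖ :=
    continuous_norm.comp p.continuous
  set M := sSup ((fun z => ‖p.eval z‖) '' K) with hM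
  have hbdd : BddAbove ((fun z => ‖p.eval z‖) '' K) :=
    (hK.image hcont).bddAbove
  have hleM : ∀ z ∈ K, ‖p.eval z‖ ≤ M := fun z hz => le_csSup hbdd ⟨z, hz, rfl⟩
  obtain ⟨z0, hz0⟩ := hKne
  have hM0 : 0 ≤ M := le_trans (norm_nonneg _) (hleM z0 hz0)
  have hΦgt : ∀ z ∉ K, 1 < ‖Φ z‖ := fun z hz => hΦbij.mapsTo hz
  -- the core estimate
  have key : ∀ lam ∉ K, ‖p.eval lam‖ ≤ M * ‖Φ lam‖ ^ T := by
    intro lam hlam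
    have hΦlam : 1 < ‖Φ lam‖ := hΦgt lam hlam
    have hXpos : (0 : ℝ) < ‖Φ lam‖ ^ T := pow_pos (lt_trans one_pos hΦlam) T
    refine le_of_forall_pos_le_add fun ε' hε' => ?_
    set ε := ε' / ‖Φ lam‖ ^ T with hεdef
    have hε : 0 < ε := div_pos hε' hXpos
    have hMε : 0 < M + ε := by linarith
    -- the per-n estimate from the maximum modulus principle
    have main : ∀ n : ℕ, ‖p.eval lam‖ ^ n ≤
        (M + ε) ^ n * ‖Φ lam‖ ^ (n * T + 1) := by
      intro n
      have hlamd : 0 < infDist lam K := (hK.isClosed.notMem_iff_infDist_pos ⟨z0, hz0⟩).mp hlam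
      -- a neighborhood of K where |p| < M + ε
      have hVopen : IsOpen {z : ℂ | ‖p.eval z‖ < M + ε} :=
        isOpen_lt hcont continuous_const
      have hKV : K ⊆ {z : ℂ | ‖p.eval z‖ < M + ε} := fun z hz =>
        lt_of_le_of_lt (hleM z hz) (lt_add_of_pos_right _ hε)
      obtain ⟨δ, hδ0, hδsub⟩ := hK.exists_cthickening_subset_open hVopen hKV
      set δ' := min (δ / 2) (infDist lam K / 2) with hδ'def
      have hδ'0 : 0 < δ' := lt_min (by linarith) (by linarith)
      have hδ'lt : δ' < infDist lam K := lt_of_le_of_lt (min_le_right _ _) (by linarith)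
      have hδ'δ : δ' < δ := lt_of_le_of_lt (min_le_left _ _) (by linarith)
      -- the eventual bound coming from the behavior at infinity
      set C := ∑ i ∈ Finset.range (p.natDegree + 1), ‖p.coeff i‖ with hCdef
      have hC0 : 0 ≤ C := Finset.sum_nonneg fun i _ => norm_nonneg _
      set D := max 1 ((C * (2 / c) ^ T) ^ n / (M + ε) ^ n) with hDdef
      have hD1 : (1 : ℝ) ≤ D := le_max_left _ _
      have h1 : ∀ᶠ z : ℂ in cocompact ℂ, 1 ≤ ‖z‖ :=
        tendsto_norm_cocompact_atTop.eventually_ge_atTop 1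
      have habs : Tendsto (fun z : ℂ => ‖Φ z / z‖) (cocompact ℂ) (nhds c) := by
        have h := (continuous_norm.tendsto ((c : ℂ))).comp hc
        simpa only [Function.comp_def, Complex.norm_real, Real.norm_eq_abs, abs_of_pos hc0] using h
      have h2 : ∀ᶠ z : ℂ in cocompact ℂ, c / 2 < ‖Φ z / z‖ :=
        habs.eventually_const_lt (half_lt_self hc0)
      have h3 : ∀ᶠ z : ℂ in cocompact ℂ, D ≤ ‖Φ z‖ :=
        (tendsto_norm_cocompact_atTop.comp hPhiInf).eventually_ge_atTop D
      obtain ⟨Cpt, hCpt, hCptsub⟩ := mem_cocompact.mp (h1.and (h2.and h3))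
      obtain ⟨R0, hR0⟩ := hCpt.isBounded.subset_closedBall 0
      set R := max R0 (‖lam‖) + 1 with hRdef
      have hlamR : ‖lam‖ < R :=
        lt_of_le_of_lt (le_max_right R0 _) (lt_add_one _)
      have hR0R : R0 < R := lt_of_le_of_lt (le_max_left _ (‖lam‖)) (lt_add_one _)
      have hRpos : 0 < R := lt_of_le_of_lt (norm_nonneg lam) hlamR
      -- bound on the sphere of radius R
      have hsphere : ∀ z : ℂ, ‖z‖ = R →
          1 ≤ ‖Φ z‖ ∧
          ‖p.eval z‖ ^ n ≤ (M + ε) ^ n * ‖Φ z‖ ^ (n * T + 1) := by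
        intro z hzR
        have hzCpt : z ∉ Cpt := by
          intro hzin
          have := hR0 hzin
          rw [mem_closedBall, Complex.dist_eq, sub_zero] at this
          rw [hzR] at this; linarith
        obtain ⟨ha1, hza, hzD⟩ := hCptsub hzCpt
        have ha0 : (0 : ℝ) < ‖z‖ := lt_of_lt_of_le one_pos ha1
        have hb1 : 1 ≤ ‖Φ z‖ := le_trans hD1 hzD
        refine ⟨hb1, ?_⟩
        have hba : c / 2 * ‖z‖ < ‖Φ z‖ := by
          rw [norm_div] at hza
          exact (lt_div_iff₀ ha0).mp hza
        have hp : ‖p.eval z‖ ≤ C * ‖z‖ ^ T :=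
          bw_poly_eval_bound p T hdeg ha1
        have hccne : (c : ℝ) ≠ 0 := ne_of_gt hc0
        have hMεn : (0 : ℝ) < (M + ε) ^ n := pow_pos hMε n
        have keyC : C ^ n ≤ (M + ε) ^ n * (c / 2) ^ (n * T) * D := by
          have heq : (M + ε) ^ n * (c / 2) ^ (n * T) * ((C * (2 / c) ^ T) ^ n / (M + ε) ^ n)
              = C ^ n * ((c / 2) * (2 / c)) ^ (n * T) := by
            rw [mul_pow, pow_mul, ← mul_pow, mul_pow]
            field_simp
            have e1 : c ^ (n * T) * c⁻¹ ^ (n * T) = 1 := by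
              rw [← mul_pow, mul_inv_cancel₀ hccne, one_pow]
            have e2 : (1 / 2 : ℝ) ^ (n * T) * 2 ^ (n * T) = 1 := by
              rw [← mul_pow]; norm_num
            linear_combination (C ^ n * (1 / 2 : ℝ) ^ (n * T) * 2 ^ (n * T)) * e1 + C ^ n * e2
          have hcc : (c / 2) * (2 / c) = 1 := by field_simp
          calc C ^ n = (M + ε) ^ n * (c / 2) ^ (n * T) *
                ((C * (2 / c) ^ T) ^ n / (M + ε) ^ n) := by
                rw [heq, hcc, one_pow, mul_one]
            _ ≤ (M + ε) ^ n * (c / 2) ^ (n * T) * D := by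
                refine mul_le_mul_of_nonneg_left (le_max_right _ _) ?_
                positivity
        calc ‖p.eval z‖ ^ n ≤ (C * ‖z‖ ^ T) ^ n :=
              pow_le_pow_left₀ (norm_nonneg _) hp n
          _ = C ^ n * (‖z‖ ^ T) ^ n := by rw [mul_pow]
          _ ≤ ((M + ε) ^ n * (c / 2) ^ (n * T) * D) * (‖z‖ ^ T) ^ n :=
              mul_le_mul_of_nonneg_right keyC (by positivity)
          _ = (M + ε) ^ n * ((c / 2 * ‖z‖) ^ (n * T) * D) := by
              rw [mul_pow, pow_mul, pow_mul]; ring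
          _ ≤ (M + ε) ^ n * (‖Φ z‖ ^ (n * T) * ‖Φ z‖) := by
              refine mul_le_mul_of_nonneg_left ?_ (by positivity)
              refine mul_le_mul ?_ hzD (by linarith) (by positivity)
              exact pow_le_pow_left₀ (by positivity) hba.le _
          _ = (M + ε) ^ n * ‖Φ z‖ ^ (n * T + 1) := by rw [pow_succ]
      -- set up the maximum modulus principle
      set W : Set ℂ := {z : ℂ | δ' / 2 < infDist z K} with hWdef
      have hWK : W ⊆ Kᶜ := by
        intro z hz hzK
        rw [hWdef, mem_setOf_eq, infDist_zero_of_mem hzK] at hz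
        linarith
      have hΦne : ∀ z ∈ W, Φ z ≠ 0 := by
        intro z hz h
        have := hΦgt z (hWK hz)
        rw [h, norm_zero] at this
        linarith
      set g : ℂ → ℂ := fun z => (p.eval z) ^ n / (Φ z) ^ (n * T + 1) with hg
      have hgdiff : DifferentiableOn ℂ g W := by
        refine DifferentiableOn.div ?_ ?_ ?_
        · exact (p.differentiable.differentiableOn).pow n
        · exact (hΦdiff.mono hWK).pow _
        · exact fun z hz => pow_ne_zero _ (hΦne z hz)
      set U : Set ℂ := {z : ℂ | δ' < infDist z K} ∩ Metric.ball 0 R with hUdef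
      have hUW : U ⊆ W := fun z hz => by
        have := hz.1
        rw [mem_setOf_eq] at this ⊢
        linarith
      have hclos : closure U ⊆ W := by
        intro z hz
        have h1 : z ∈ closure {z : ℂ | δ' < infDist z K} :=
          closure_mono inter_subset_left hz
        have h2 : δ' ≤ infDist z K :=
          closure_lt_subset_le continuous_const (continuous_infDist_pt K) h1
        rw [hWdef, mem_setOf_eq]
        linarith
      have hgdc : DiffContOnCl ℂ g U :=
        ⟨hgdiff.mono hUW, hgdiff.continuousOn.mono hclos⟩
      have hUbd : Bornology.IsBounded U := isBounded_ball.subset inter_subset_right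
      have hfront : ∀ z ∈ frontier U, ‖g z‖ ≤ (M + ε) ^ n := by
        intro z hz
        have hmem := frontier_inter_subset {z : ℂ | δ' < infDist z K} (Metric.ball 0 R) hz
        have hbase : 1 ≤ ‖Φ z‖ ∧
            ‖p.eval z‖ ^ n ≤ (M + ε) ^ n * ‖Φ z‖ ^ (n * T + 1) := by
          rcases hmem with h | h
          · -- on the level set infDist = δ'
            have hfr : infDist z K = δ' := by
              have := frontier_lt_subset_eq continuous_const (continuous_infDist_pt K) h.1
              exact (mem_setOf_eq ▸ this).symm
            have hzK : z ∉ K := by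
              intro hzK
              rw [infDist_zero_of_mem hzK] at hfr
              linarith
            have hzV : ‖p.eval z‖ < M + ε := by
              have hth : z ∈ thickening δ K := by
                rw [mem_thickening_iff]
                have : infDist z K < δ := by rw [hfr]; linarith
                exact (infDist_lt_iff ⟨z0, hz0⟩).mp this
              exact hδsub (thickening_subset_cthickening δ K hth)
            have hb1 : 1 ≤ ‖Φ z‖ := (hΦgt z hzK).le
            refine ⟨hb1, ?_⟩
            calc ‖p.eval z‖ ^ n ≤ (M + ε) ^ n :=
                  pow_le_pow_left₀ (norm_nonneg _) hzV.le n
              _ ≤ (M + ε) ^ n * ‖Φ z‖ ^ (n * T + 1) :=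
                  le_mul_of_one_le_right (by positivity) (by simpa using pow_le_pow_left₀ zero_le_one hb1 (n * T + 1))
          · -- on the sphere of radius R
            have hzR : ‖z‖ = R := by
              have := h.2
              rw [frontier_ball 0 (ne_of_gt hRpos)] at this
              rw [mem_sphere, Complex.dist_eq, sub_zero] at this
              exact this
            exact hsphere z hzR
        obtain ⟨hb1, hbound⟩ := hbase
        have hbpos : (0 : ℝ) < ‖Φ z‖ ^ (n * T + 1) := pow_pos (by linarith) _
        rw [hg]
        simp only [norm_div, norm_pow]
        rw [div_le_iff₀ hbpos]
        exact hbound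
      have hlamU : lam ∈ U := by
        constructor
        · rw [mem_setOf_eq]; exact hδ'lt
        · rw [mem_ball, Complex.dist_eq, sub_zero]; exact hlamR
      have hfinal := Complex.norm_le_of_forall_mem_frontier_norm_le hUbd hgdc hfront
        (subset_closure hlamU)
      rw [hg] at hfinal
      simp only [norm_div, norm_pow] at hfinal
      rw [div_le_iff₀ (pow_pos (lt_trans one_pos hΦlam) _)] at hfinal
      exact hfinal
    -- from the per-n estimate, take n-th roots
    have step : ‖p.eval lam‖ ≤ (M + ε) * ‖Φ lam‖ ^ T := by
      by_contra hcon
      push_neg at hcon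
      set b := (M + ε) * ‖Φ lam‖ ^ T with hbdef
      have hbpos : 0 < b := mul_pos hMε hXpos
      have ht : 1 < ‖p.eval lam‖ / b := (one_lt_div hbpos).mpr hcon
      obtain ⟨n, hn⟩ := pow_unbounded_of_one_lt (‖Φ lam‖) ht
      have h2 : ‖p.eval lam‖ ^ n ≤ b ^ n * ‖Φ lam‖ := by
        calc ‖p.eval lam‖ ^ n
            ≤ (M + ε) ^ n * ‖Φ lam‖ ^ (n * T + 1) := main n
          _ = b ^ n * ‖Φ lam‖ := by
              rw [hbdef, mul_pow, pow_succ, pow_mul]; ring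
      have h3 : (‖p.eval lam‖ / b) ^ n ≤ ‖Φ lam‖ := by
        rw [div_pow, div_le_iff₀ (pow_pos hbpos n)]
        linarith [h2]
      exact absurd h3 (not_le.mpr hn)
    have hεeq : (M + ε) * ‖Φ lam‖ ^ T = M * ‖Φ lam‖ ^ T + ε' := by
      rw [hεdef]
      field_simp
    linarith [step]
  constructor
  · intro lam hlam
    have hb := hΦgt lam hlam
    have hbpos : (0 : ℝ) < ‖Φ lam‖ := lt_trans one_pos hb
    have hexp : Real.exp ((T : ℝ) * Real.log (‖Φ lam‖)) = ‖Φ lam‖ ^ T := by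
      rw [Real.exp_nat_mul, Real.exp_log hbpos]
    rw [hexp, mul_comm]
    exact key lam hlam
  · intro h0K hp0
    have hb := hΦgt 0 h0K
    have hbpos : (0 : ℝ) < ‖Φ 0‖ := lt_trans one_pos hb
    have h1 := key 0 h0K
    rw [hp0, norm_one] at h1
    have hexp : Real.exp ((T : ℝ) * Real.log (‖Φ 0‖)) = ‖Φ 0‖ ^ T := by
      rw [Real.exp_nat_mul, Real.exp_log hbpos]
    rw [Real.exp_neg, hexp, ← one_div, div_le_iff₀ (pow_pos hbpos T)]
    exact h1
end

section
/- Let Φ_Ω be the conformal map of the exterior of the unit half-disc Ω = {z : |z| ≤ 1, Re z ≥ 0} onto the exterior of the unit disc given by Φ_Ω(λ) = [(1 - w) - √3·i·(1 + w)] / [2(w - 1)] where w = ((λ-i)/(λ+i))^{2/3}. Then |Φ_Ω(0)| = 1 and |Φ_Ω'(0)|/|Φ_Ω(0)| = 4/(3√3); hence the normal derivative of the Green's function g_Ω = log|Φ_Ω| at 0 equals 4/(3√3). -/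
open Complex

/-- The conformal map `Φ_Ω` of the exterior of the unit half-disc onto the exterior of
the unit disc, `Φ_Ω(λ) = [(1 - w) - √3 i (1 + w)] / (2(w - 1))` with `w = ((λ-i)/(λ+i))^{2/3}`
(suitable branch of the 2/3 power), satisfies `|Φ_Ω(0)| = 1` and
`|Φ_Ω'(0)| / |Φ_Ω(0)| = 4/(3√3)`; hence the normal derivative of the Green's function
`g_Ω = log |Φ_Ω|` at `0` equals `4/(3√3)`. -/
theorem halfdisc_green_normal_derivative :
    ∃ w : ℂ → ℂ, (∀ lam : ℂ, (w lam) ^ 3 = ((lam - I) / (lam + I)) ^ 2) ∧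
      ∀ Φ : ℂ → ℂ,
        (Φ = fun lam =>
          ((1 - w lam) - (Real.sqrt 3 : ℂ) * I * (1 + w lam)) / (2 * (w lam - 1))) →
        ‖Φ 0‖ = 1 ∧
        ∃ d : ℂ, HasDerivAt Φ d 0 ∧
          ‖d‖ / ‖Φ 0‖ = 4 / (3 * Real.sqrt 3) := by
  set s : ℝ := Real.sqrt 3 with hs
  have hs0 : (0:ℝ) < s := Real.sqrt_pos.mpr (by norm_num)
  have hsq : s^2 = 3 := Real.sq_sqrt (by norm_num)
  have hs3 : (s:ℂ)^2 = 3 := by exact_mod_cast hsq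
  set e : ℂ := Complex.exp (2 * Real.pi * I / 3) with he
  set w : ℂ → ℂ := fun lam => e * (-( (lam - I)/(lam + I) )) ^ ((2:ℂ)/3) with hwdef
  have he3 : e ^ 3 = 1 := by
    rw [he, ← Complex.exp_nat_mul]
    rw [show (3:ℕ) * (2 * (Real.pi:ℂ) * I / 3) = 2 * Real.pi * I by push_cast; ring]
    exact Complex.exp_two_pi_mul_I
  have hone : ∀ x : ℂ, x = 0 → (-( (x - I)/(x + I) )) = 1 := by
    intro x hx
    subst hx
    rw [show (0:ℂ) - I = -I by ring, show (0:ℂ) + I = I by ring]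
    rw [neg_div, neg_neg, div_self Complex.I_ne_zero]
  refine ⟨w, ?_, ?_⟩
  · intro lam
    have h1 : ((-( (lam - I)/(lam + I) )) ^ ((2:ℂ)/3)) ^ (3:ℕ)
        = (-( (lam - I)/(lam + I) )) ^ ((2:ℕ):ℂ) := by
      rw [← Complex.cpow_nat_mul]
      norm_num
    rw [hwdef]
    simp only [mul_pow, he3, one_mul]
    rw [h1, Complex.cpow_natCast]
    ring
  · intro Φ hΦ
    have hev : e = -1/2 + (s/2) * I := by
      rw [he, show (2 * (Real.pi:ℂ) * I / 3) = ((2 * Real.pi / 3 : ℝ):ℂ) * I by push_cast; ring,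
        Complex.exp_mul_I, ← Complex.ofReal_cos, ← Complex.ofReal_sin]
      rw [show (2 * Real.pi / 3 : ℝ) = Real.pi - Real.pi / 3 by ring,
        Real.cos_pi_sub, Real.sin_pi_sub, Real.cos_pi_div_three, Real.sin_pi_div_three]
      push_cast
      ring
    have hw0 : w 0 = -1/2 + (s/2) * I := by
      rw [hwdef]
      simp only
      rw [hone 0 rfl, Complex.one_cpow, mul_one, hev]
    have hg : HasDerivAt (fun lam : ℂ => -((lam - I)/(lam + I))) (2*I) 0 := by
      have h1 : HasDerivAt (fun lam : ℂ => lam - I) 1 0 :=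
        (hasDerivAt_id 0).sub_const I
      have h2 : HasDerivAt (fun lam : ℂ => lam + I) 1 0 :=
        (hasDerivAt_id 0).add_const I
      have hne : (0:ℂ) + I ≠ 0 := by simp [Complex.I_ne_zero]
      have h3 := (h1.div h2 hne).neg
      refine h3.congr_deriv ?_
      have hI : (I:ℂ)^2 = -1 := Complex.I_sq
      simp only [zero_add, zero_sub, one_mul, mul_one, sub_neg_eq_add, hI]
      ring
    have hslit : (fun lam : ℂ => -((lam - I)/(lam + I))) 0 ∈ Complex.slitPlane := by
      simp only
      rw [hone 0 rfl]
      exact Complex.one_mem_slitPlane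
    have hwd : HasDerivAt w (e * (4/3 * I)) 0 := by
      have h4 := (hg.cpow_const (c := (2:ℂ)/3) hslit).const_mul e
      refine h4.congr_deriv ?_
      rw [hone 0 rfl, Complex.one_cpow]
      ring
    set w' : ℂ := e * (4/3 * I) with hw'
    have hw'v : w' = (-1/2 + (s/2) * I) * (4/3 * I) := by rw [hw', hev]
    have hN : HasDerivAt (fun lam => (1 - w lam) - (s:ℂ) * I * (1 + w lam))
        (-w' - (s:ℂ)*I*w') 0 := by
      have h1 : HasDerivAt (fun lam => (1:ℂ) - w lam) (-w') 0 := hwd.const_sub 1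
      have h2 : HasDerivAt (fun lam => (s:ℂ)*I*(1 + w lam)) ((s:ℂ)*I*w') 0 :=
        (hwd.const_add 1).const_mul _
      exact h1.sub h2
    have hD : HasDerivAt (fun lam => 2 * (w lam - 1)) (2*w') 0 :=
      (hwd.sub_const 1).const_mul 2
    have hD0 : 2 * (w 0 - 1) ≠ 0 := by
      rw [hw0]
      intro h
      have h5 := congrArg Complex.re h
      simp [Complex.add_re, Complex.mul_re] at h5
      norm_num at h5
    have hdiv := hN.div hD hD0
    have hΦ0 : Φ 0 = -1 := by
      rw [hΦ]
      simp only
      have hnum : (1 - w 0) - (s:ℂ) * I * (1 + w 0) = -(2 * (w 0 - 1)) := by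
        rw [hw0]
        ring_nf
        rw [Complex.I_sq, hs3]
        ring
      rw [hnum, neg_div, div_self hD0]
    have hΦabs : ‖Φ 0‖ = 1 := by rw [hΦ0]; simp
    refine ⟨hΦabs, ?_, ?_, ?_⟩
    · exact ((-w' - (s:ℂ)*I*w') * (2 * (w 0 - 1)) -
        ((1 - w 0) - (s:ℂ) * I * (1 + w 0)) * (2*w')) / (2 * (w 0 - 1))^2
    · rw [hΦ]; exact hdiv
    · rw [hΦabs, div_one]
      have h2a : (2 * (((-1/2 + (s/2) * I : ℂ)) - 1))^2 ≠ 0 := by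
        apply pow_ne_zero
        rw [← hw0]; exact hD0
      have hval : ((-w' - (s:ℂ)*I*w') * (2 * (w 0 - 1)) -
          ((1 - w 0) - (s:ℂ) * I * (1 + w 0)) * (2*w')) / (2 * (w 0 - 1))^2
          = ((4 / (3*s) : ℝ) : ℂ) := by
        rw [hw0, hw'v]
        rw [div_eq_iff (by rw [← hw0] at h2a ⊢; exact h2a)]
        have hsne : (s:ℂ) ≠ 0 := by exact_mod_cast ne_of_gt hs0
        push_cast
        field_simp
        rw [Complex.ext_iff]
        constructor <;>
        · simp [pow_succ, Complex.add_re, Complex.add_im, Complex.mul_re, Complex.mul_im,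
            Complex.sub_re, Complex.sub_im,
            Complex.ofReal_re, Complex.ofReal_im, Complex.I_re, Complex.I_im,
            Complex.one_re, Complex.one_im]
          ring_nf
          nlinarith [hsq, hs0]
      rw [hval, Complex.norm_real, Real.norm_eq_abs]
      rw [abs_of_pos (by positivity)]
end
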